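/- On ℝ³ with coordinates (x₁, x₂, x₃), define Christoffel symbols by Γ³₁₂ = Γ³₂₁ = x₁ + x₂² and Γ^λ_{μν} = 0 for all other index triples (a torsion-free connection), and let γ : ℝ → ℝ³ be γ(t) = (−t², t, 0). Then: (i) (∇γ)(t) = (−2t, 1, 0), (∇²γ)(t) = (−2, 0, 0), and (∇³γ)(t) = (0, 0, 0) for all t, so γ is torsionless ((∇γ)(t), (∇²γ)(t) are linearly independent and (∇γ)(t), (∇²γ)(t), (∇³γ)(t) are linearly dependent for every t); (ii) for every t₀ ∈ ℝ, the curve c(s) = (−2t₀ s − t₀², s + t₀, (1/3) t₀ s⁴) is a geodesic of this connection (it satisfies (c^λ)''(s) + Σ Γ^λ_{μν}(c(s)) (c^μ)'(s) (c^ν)'(s) = 0) with c(0) = γ(t₀) and c'(0) = γ'(t₀). -/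

import Mathlib

open Set

noncomputable section

/-- Iterated covariant derivative of a curve `γ` with respect to the Christoffel
symbols `Γ` (in local coordinates): `covDeriv Γ γ k` is `∇^{k+1} γ`, i.e.
`covDeriv Γ γ 0 = ∇γ = γ'` and
`(∇^{k+1}γ)^λ(t) = d/dt (∇^k γ)^λ(t) + Σ_{μ,ν} Γ^λ_{μν}(γ(t)) (γ^μ)'(t) (∇^k γ)^ν(t)`. -/
noncomputable def covDeriv {m : ℕ} (Γ : (Fin m → ℝ) → Fin m → Fin m → Fin m → ℝ)
    (γ : ℝ → Fin m → ℝ) : ℕ → ℝ → Fin m → ℝ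
  | 0 => deriv γ
  | k + 1 => fun t l =>
      deriv (fun u => covDeriv Γ γ k u l) t +
        ∑ μ, ∑ ν, Γ (γ t) l μ ν * deriv γ t μ * covDeriv Γ γ k t ν

/-- The Christoffel symbols on `ℝ³` with `Γ³₁₂ = Γ³₂₁ = x₁ + x₂²` and all other
components zero (a torsion-free connection). -/
def ΓEx : (Fin 3 → ℝ) → Fin 3 → Fin 3 → Fin 3 → ℝ :=
  fun x l μ ν =>
    if l = 2 ∧ ((μ = 0 ∧ ν = 1) ∨ (μ = 1 ∧ ν = 0)) then x 0 + (x 1) ^ 2 else 0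

/-- The curve `γ(t) = (−t², t, 0)` in `ℝ³`. -/
def γEx : ℝ → Fin 3 → ℝ := fun t => ![-t ^ 2, t, 0]

lemma hdγ (t : ℝ) : HasDerivAt γEx ![-2 * t, 1, 0] t := by
  rw [hasDerivAt_pi]
  intro i
  fin_cases i
  · show HasDerivAt (fun t : ℝ => -t ^ 2) (-2 * t) t
    have := (hasDerivAt_pow 2 t).neg
    convert this using 1
    · rfl
    · rfl
    · rfl
    · push_cast; ring
  · exact hasDerivAt_id t
  · exact hasDerivAt_const t 0

lemma cd0 (t : ℝ) : covDeriv ΓEx γEx 0 t = ![-2 * t, 1, 0] := (hdγ t).deriv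

lemma cd1 (t : ℝ) : covDeriv ΓEx γEx 1 t = ![-2, 0, 0] := by
  funext l
  show deriv (fun u => covDeriv ΓEx γEx 0 u l) t +
      ∑ μ, ∑ ν, ΓEx (γEx t) l μ ν * deriv γEx t μ * covDeriv ΓEx γEx 0 t ν = _
  have h1 : (fun u => covDeriv ΓEx γEx 0 u l) = fun u => (![-2 * u, 1, 0] : Fin 3 → ℝ) l :=
    funext fun u => by rw [cd0 u]
  rw [h1, (hdγ t).deriv, cd0 t]
  have hΓ : γEx t 0 + (γEx t 1) ^ 2 = 0 := by simp [γEx]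
  have hd : deriv (fun u : ℝ => -2 * u) t = -2 := by
    simpa using ((hasDerivAt_id t).const_mul (-2 : ℝ)).deriv
  have hd2 : deriv (HMul.hMul (2 : ℝ)) t = 2 := by
    simpa using ((hasDerivAt_id t).const_mul (2 : ℝ)).deriv
  fin_cases l <;> simp [Fin.sum_univ_three, ΓEx, hΓ, hd, hd2]

lemma cd2 (t : ℝ) : covDeriv ΓEx γEx 2 t = 0 := by
  funext l
  show deriv (fun u => covDeriv ΓEx γEx 1 u l) t +
      ∑ μ, ∑ ν, ΓEx (γEx t) l μ ν * deriv γEx t μ * covDeriv ΓEx γEx 1 t ν = _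
  have h1 : (fun u => covDeriv ΓEx γEx 1 u l) = fun _ => (![-2, 0, 0] : Fin 3 → ℝ) l :=
    funext fun u => by rw [cd1 u]
  rw [h1, (hdγ t).deriv, cd1 t]
  have hΓ : γEx t 0 + (γEx t 1) ^ 2 = 0 := by simp [γEx]
  fin_cases l <;> simp [Fin.sum_univ_three, ΓEx, hΓ]

lemma hdc (t₀ s : ℝ) : HasDerivAt (fun s : ℝ =>
      (![-2 * t₀ * s - t₀ ^ 2, s + t₀, (1 / 3 : ℝ) * t₀ * s ^ 4] : Fin 3 → ℝ))
      ![-2 * t₀, 1, 4 / 3 * t₀ * s ^ 3] s := by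
  rw [hasDerivAt_pi]
  intro i
  fin_cases i
  · show HasDerivAt (fun u : ℝ => -2 * t₀ * u - t₀ ^ 2) (-2 * t₀) s
    simpa using ((hasDerivAt_id s).const_mul (-2 * t₀)).sub_const (t₀ ^ 2)
  · show HasDerivAt (fun u : ℝ => u + t₀) 1 s
    simpa using (hasDerivAt_id s).add_const t₀
  · show HasDerivAt (fun u : ℝ => 1 / 3 * t₀ * u ^ 4) (4 / 3 * t₀ * s ^ 3) s
    have := (hasDerivAt_pow 4 s).const_mul (1 / 3 * t₀)
    convert this using 1
    · rfl
    · push_cast; ring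

theorem example_torsionless_curve_and_geodesics :
    (∀ x l μ ν, ΓEx x l μ ν = ΓEx x l ν μ) ∧
    (∀ t : ℝ, covDeriv ΓEx γEx 0 t = ![-2 * t, 1, 0]) ∧
    (∀ t : ℝ, covDeriv ΓEx γEx 1 t = ![-2, 0, 0]) ∧
    (∀ t : ℝ, covDeriv ΓEx γEx 2 t = 0) ∧
    (∀ t : ℝ,
      LinearIndependent ℝ ![covDeriv ΓEx γEx 0 t, covDeriv ΓEx γEx 1 t] ∧
      ¬ LinearIndependent ℝ
        ![covDeriv ΓEx γEx 0 t, covDeriv ΓEx γEx 1 t, covDeriv ΓEx γEx 2 t]) ∧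
    (∀ t₀ : ℝ,
      (fun s : ℝ => (![-2 * t₀ * s - t₀ ^ 2, s + t₀, (1 / 3 : ℝ) * t₀ * s ^ 4] :
          Fin 3 → ℝ)) 0 = γEx t₀ ∧
      deriv (fun s : ℝ =>
          (![-2 * t₀ * s - t₀ ^ 2, s + t₀, (1 / 3 : ℝ) * t₀ * s ^ 4] :
            Fin 3 → ℝ)) 0 = deriv γEx t₀ ∧
      ∀ (s : ℝ) (l : Fin 3),
        deriv (deriv (fun u : ℝ =>
            (![-2 * t₀ * u - t₀ ^ 2, u + t₀, (1 / 3 : ℝ) * t₀ * u ^ 4] :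
              Fin 3 → ℝ) l)) s +
          ∑ μ, ∑ ν,
            ΓEx (![-2 * t₀ * s - t₀ ^ 2, s + t₀, (1 / 3 : ℝ) * t₀ * s ^ 4]) l μ ν *
            deriv (fun u : ℝ =>
              (![-2 * t₀ * u - t₀ ^ 2, u + t₀, (1 / 3 : ℝ) * t₀ * u ^ 4] :
                Fin 3 → ℝ) μ) s *
            deriv (fun u : ℝ =>
              (![-2 * t₀ * u - t₀ ^ 2, u + t₀, (1 / 3 : ℝ) * t₀ * u ^ 4] :
                Fin 3 → ℝ) ν) s = 0) := by
  refine ⟨?_, cd0, cd1, cd2, ?_, ?_⟩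
  · intro x l μ ν
    unfold ΓEx
    by_cases h : l = 2 ∧ ((μ = 0 ∧ ν = 1) ∨ (μ = 1 ∧ ν = 0))
    · rw [if_pos h, if_pos ⟨h.1, h.2.symm.imp And.symm And.symm⟩]
    · rw [if_neg h, if_neg (fun h' => h ⟨h'.1, h'.2.symm.imp And.symm And.symm⟩)]
  · intro t
    rw [cd0, cd1, cd2]
    constructor
    · rw [LinearIndependent.pair_iff]
      intro a b h
      have h0 := congrFun h 0
      have h1 := congrFun h 1
      simp at h0 h1
      refine ⟨h1, ?_⟩
      subst h1; linarith
    · intro h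
      simpa using h.ne_zero 2
  · intro t₀
    have hcomp : ∀ (s : ℝ) (μ : Fin 3),
        deriv (fun u : ℝ =>
          (![-2 * t₀ * u - t₀ ^ 2, u + t₀, (1 / 3 : ℝ) * t₀ * u ^ 4] : Fin 3 → ℝ) μ) s
          = ![-2 * t₀, 1, 4 / 3 * t₀ * s ^ 3] μ :=
      fun s μ => (hasDerivAt_pi.1 (hdc t₀ s) μ).deriv
    refine ⟨?_, ?_, ?_⟩
    · funext i; fin_cases i <;> norm_num [γEx]
    · rw [(hdc t₀ 0).deriv, (hdγ t₀).deriv]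
      funext i; fin_cases i <;> norm_num
    · intro s l
      have h1 : (deriv (fun u : ℝ =>
          (![-2 * t₀ * u - t₀ ^ 2, u + t₀, (1 / 3 : ℝ) * t₀ * u ^ 4] : Fin 3 → ℝ) l))
          = fun x => (![-2 * t₀, 1, 4 / 3 * t₀ * x ^ 3] : Fin 3 → ℝ) l :=
        funext fun x => hcomp x l
      rw [h1]
      have hd3 : deriv (fun x : ℝ => 4 / 3 * t₀ * x ^ 3) s = 4 * t₀ * s ^ 2 := by
        rw [((hasDerivAt_pow 3 s).const_mul (4 / 3 * t₀)).deriv]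
        push_cast; ring
      simp only [Fin.sum_univ_three]
      rw [hcomp s 0, hcomp s 1, hcomp s 2]
      fin_cases l <;> simp [ΓEx, hd3] <;> ring
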